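/- Let s, t ≥ 4 both be even. Let x = (i, j) and y = (i', j) be vertices of C_s □ C_t lying in the same copy of C_s whose first coordinates are at distance s/2 in C_s (i.e., x and y are diametral in that copy of C_s), let z = (i'', j) where i'' is adjacent to i in C_s, and let w = (i, j') where j' is adjacent to j in C_t. Then {x, y, z, w} is a resolving set of C_s □ C_t. -/

import Mathlib

open SimpleGraph
open Fin.CommRing


/-- gauge for cycle distance -/
def cg (n : ℕ) (a : Fin n) : ℕ := min a.val (n - a.val)

lemma mod_two_lt {x n : ℕ} (h : x < 2 * n) : x % n = if x < n then x else x - n := by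
  split_ifs with hx
  · exact Nat.mod_eq_of_lt hx
  · rw [Nat.mod_eq_sub_mod (by omega), Nat.mod_eq_of_lt (by omega)]

lemma cg_neg {n : ℕ} (a : Fin n) : cg n (-a) = cg n a := by
  have ha := a.isLt
  unfold cg
  rw [Fin.neg_def]
  simp only
  rcases Nat.eq_zero_or_pos a.val with h0 | h0
  · rw [h0]; simp
  · rw [Nat.mod_eq_of_lt (by omega)]; omega

lemma cg_eq {n : ℕ} [NeZero n] (a b : Fin n) (h : cg n a = cg n b) : a = b ∨ a + b = 0 := by
  have ha := a.isLt
  have hb := b.isLt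
  haveI : NeZero n := ⟨by omega⟩
  unfold cg at h
  have key : a.val = b.val ∨ a.val + b.val = n := by omega
  rcases key with k | k
  · exact Or.inl (Fin.ext k)
  · right
    apply Fin.ext
    rw [Fin.val_add, Fin.val_zero, k, Nat.mod_self]

lemma cg_add_one {n : ℕ} [NeZero n] (hn : 2 ≤ n) (a : Fin n) : cg n (a + 1) ≤ cg n a + 1 := by
  have ha := a.isLt
  haveI : NeZero n := ⟨by omega⟩
  unfold cg
  rw [Fin.val_add, Fin.val_one', Nat.mod_eq_of_lt hn,
    mod_two_lt (by omega)]
  split_ifs <;> omega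

lemma cycle_walk_lb {n : ℕ} [NeZero n] (hn : 2 ≤ n) :
    ∀ {u v : Fin n} (w : (cycleGraph n).Walk u v), cg n (v - u) ≤ w.length := by
  haveI : NeZero n := ⟨by omega⟩
  intro u v w
  induction w with
  | nil => simp [cg]
  | @cons u b v h w ih =>
    rw [cycleGraph_adj'] at h
    have h1 : (1 : Fin n).val = 1 := by rw [Fin.val_one', Nat.mod_eq_of_lt hn]
    rcases h with h | h
    · -- u - b = 1
      have hub : u - b = 1 := Fin.ext (by rw [h, h1])
      have hvu : v - u = (v - b) - 1 := by rw [← hub]; ring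
      rw [hvu, Walk.length_cons]
      calc cg n (v - b - 1) = cg n (-(v - b - 1)) := (cg_neg _).symm
        _ = cg n (-(v - b) + 1) := by ring_nf
        _ ≤ cg n (-(v - b)) + 1 := cg_add_one hn _
        _ = cg n (v - b) + 1 := by rw [cg_neg]
        _ ≤ w.length + 1 := by omega
    · -- b - u = 1
      have hbu : b - u = 1 := Fin.ext (by rw [h, h1])
      have hvu : v - u = (v - b) + 1 := by rw [← hbu]; ring
      rw [hvu, Walk.length_cons]
      calc cg n (v - b + 1) ≤ cg n (v - b) + 1 := cg_add_one hn _
        _ ≤ w.length + 1 := by omega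

lemma cycle_connected {n : ℕ} (hn : 2 ≤ n) : (cycleGraph n).Connected := by
  obtain ⟨m, rfl⟩ : ∃ m, n = m + 1 := ⟨n - 1, by omega⟩
  exact cycleGraph_connected

lemma cycle_dist_add_le {n : ℕ} [NeZero n] (hn : 2 ≤ n) (u : Fin n) (k : ℕ) :
    (cycleGraph n).dist u (u + (k : Fin n)) ≤ k := by
  haveI : NeZero n := ⟨by omega⟩
  induction k with
  | zero => simp
  | succ k ih =>
    have hadj : (cycleGraph n).Adj (u + (k : Fin n)) (u + ((k+1 : ℕ) : Fin n)) := by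
      rw [cycleGraph_adj']
      right
      have : u + ((k+1 : ℕ) : Fin n) - (u + (k : Fin n)) = 1 := by
        push_cast
        ring
      rw [this, Fin.val_one', Nat.mod_eq_of_lt hn]
    calc (cycleGraph n).dist u (u + ((k+1:ℕ) : Fin n))
        ≤ (cycleGraph n).dist u (u + (k : Fin n)) +
          (cycleGraph n).dist (u + (k : Fin n)) (u + ((k+1:ℕ) : Fin n)) :=
          (cycle_connected hn).dist_triangle
      _ ≤ k + 1 := by
          have : (cycleGraph n).dist (u + (k : Fin n)) (u + ((k+1:ℕ) : Fin n)) = 1 :=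
            dist_eq_one_iff_adj.mpr hadj
          omega

lemma cycle_dist {n : ℕ} (hn : 2 ≤ n) (u v : Fin n) :
    (cycleGraph n).dist u v = cg n (v - u) := by
  haveI : NeZero n := ⟨by omega⟩
  apply le_antisymm
  · have h1 : (cycleGraph n).dist u v ≤ (v - u).val := by
      have := cycle_dist_add_le hn u (v - u).val
      rwa [Fin.cast_val_eq_self, add_sub_cancel] at this
    have h2 : (cycleGraph n).dist u v ≤ (u - v).val := by
      have := cycle_dist_add_le hn v (u - v).val
      rw [Fin.cast_val_eq_self, add_sub_cancel] at this
      rwa [dist_comm]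
    by_cases huv : u = v
    · subst huv; simp [cg]
    · have hne : (v - u) ≠ 0 := sub_ne_zero.mpr (Ne.symm huv)
      have : (u - v).val = n - (v - u).val := by
        have : u - v = -(v - u) := by ring
        rw [this, Fin.neg_def]
        simp only
        rw [Nat.mod_eq_of_lt (by
          have : (v - u).val ≠ 0 := fun h => hne (Fin.ext (by simpa using h))
          omega)]
      unfold cg
      omega
  · obtain ⟨w, hw⟩ := (cycle_connected hn).exists_walk_length_eq_dist u v
    rw [← hw]
    exact cycle_walk_lb hn w

lemma cg_add_half {n m : ℕ} (hm : n = 2 * m) (x h : Fin n) (hh : h.val = m) :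
    cg n (x + h) + cg n x = m := by
  have hx := x.isLt
  unfold cg
  rw [Fin.val_add, hh, mod_two_lt (by omega)]
  split_ifs <;> omega

lemma double_ne_zero {n : ℕ} [NeZero n] (hn : 3 ≤ n) (e : Fin n) (he : e.val = 1 ∨ (-e).val = 1) :
    e + e ≠ 0 := by
  haveI : NeZero n := ⟨by omega⟩
  have hev := e.isLt
  have hval : e.val = 1 ∨ e.val = n - 1 := by
    rcases he with h | h
    · exact Or.inl h
    · right
      rw [Fin.neg_def] at h
      simp only at h
      rw [mod_two_lt (by omega)] at h
      split_ifs at h <;> omega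
  intro hcon
  have : (e + e).val = 0 := by rw [hcon]; rfl
  rw [Fin.val_add, mod_two_lt (by omega)] at this
  split_ifs at this <;> omega

lemma boxProd_walk_lb (hG : G.Connected) (hH : H.Connected) :
    ∀ {x y : α × β} (w : (G □ H).Walk x y),
      G.dist x.1 y.1 + H.dist x.2 y.2 ≤ w.length := by
  intro x y w
  induction w with
  | nil => simp
  | @cons x b y h w ih =>
    rw [Walk.length_cons]
    rcases h with ⟨hadj, heq⟩ | ⟨hadj, heq⟩
    · have h1 : G.dist x.1 y.1 ≤ G.dist x.1 b.1 + G.dist b.1 y.1 := hG.dist_triangle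
      have h2 : G.dist x.1 b.1 = 1 := dist_eq_one_iff_adj.mpr hadj
      have h3 : H.dist x.2 y.2 = H.dist b.2 y.2 := by rw [heq]
      omega
    · have h1 : H.dist x.2 y.2 ≤ H.dist x.2 b.2 + H.dist b.2 y.2 := hH.dist_triangle
      have h2 : H.dist x.2 b.2 = 1 := dist_eq_one_iff_adj.mpr hadj
      have h3 : G.dist x.1 y.1 = G.dist b.1 y.1 := by rw [heq]
      omega

lemma boxProd_dist (hG : G.Connected) (hH : H.Connected) (x y : α × β) :
    (G □ H).dist x y = G.dist x.1 y.1 + H.dist x.2 y.2 := by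
  apply le_antisymm
  · obtain ⟨w1, hw1⟩ := hG.exists_walk_length_eq_dist x.1 y.1
    obtain ⟨w2, hw2⟩ := hH.exists_walk_length_eq_dist x.2 y.2
    obtain ⟨x1, x2⟩ := x
    obtain ⟨y1, y2⟩ := y
    have := dist_le ((w1.boxProdLeft H x2).append (Walk.boxProdRight G y1 w2))
    have e1 : (w1.boxProdLeft H x2).length = w1.length := Walk.length_map _ _
    have e2 : (Walk.boxProdRight G y1 w2).length = w2.length := Walk.length_map _ _
    rw [Walk.length_append, e1, e2] at this
    simpa [hw1, hw2] using this
  · obtain ⟨w, hw⟩ := (hG.boxProd hH).exists_walk_length_eq_dist x y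
    rw [← hw]
    exact boxProd_walk_lb hG hH w

/-- `W` is a resolving set of `G`: every pair of distinct vertices is
distinguished by its distance to some vertex of `W`. -/
def IsResolving {V : Type*} (G : SimpleGraph V) (W : Set V) : Prop :=
  ∀ x y : V, x ≠ y → ∃ z ∈ W, G.dist x z ≠ G.dist y z

/-- For even `s, t ≥ 4`: if `x = (i,j)` and `y = (i',j)` are diametral in a copy of
`C_s` (their first coordinates are at distance `s/2` in `C_s`), `z = (i'',j)` with
`i''` adjacent to `i` in `C_s`, and `w = (i,j')` with `j'` adjacent to `j` in `C_t`,
then `{x,y,z,w}` is a resolving set of `C_s □ C_t`. -/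
theorem torus_basis_even (s t : ℕ) (hs : 4 ≤ s) (ht : 4 ≤ t)
    (hes : Even s) (het : Even t)
    (i i' i'' : Fin s) (j j' : Fin t)
    (hdiam : (cycleGraph s).dist i i' = s / 2)
    (hadj1 : (cycleGraph s).Adj i i'')
    (hadj2 : (cycleGraph t).Adj j j') :
    IsResolving (cycleGraph s □ cycleGraph t)
      {(i, j), (i', j), (i'', j), (i, j')} := by
  haveI : NeZero s := ⟨by omega⟩
  haveI : NeZero t := ⟨by omega⟩
  have hs2 : 2 ≤ s := by omega
  have ht2 : 2 ≤ t := by omega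
  have hGc : (cycleGraph s).Connected := cycle_connected hs2
  have hHc : (cycleGraph t).Connected := cycle_connected ht2
  obtain ⟨m, hm'⟩ := hes
  have hm : s = 2 * m := by omega
  have hm2 : 2 ≤ m := by omega
  -- i' - i has value m
  have hhalf : (i' - i).val = m := by
    rw [cycle_dist hs2] at hdiam
    have hv := (i' - i).isLt
    unfold cg at hdiam
    omega
  rintro ⟨a, b⟩ ⟨c, d⟩ hpq
  by_contra hcon
  push_neg at hcon
  have h1 := hcon (i, j) (by simp)
  have h2 := hcon (i', j) (by simp)
  have h3 := hcon (i'', j) (by simp)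
  have h4 := hcon (i, j') (by simp)
  rw [boxProd_dist hGc hHc, boxProd_dist hGc hHc] at h1 h2 h3 h4
  simp only [cycle_dist hs2, cycle_dist ht2] at h1 h2 h3 h4
  -- anti-diametral identities
  have hAa : cg s ((i - a) + (i' - i)) + cg s (i - a) = m := cg_add_half hm _ _ hhalf
  have hAc : cg s ((i - c) + (i' - i)) + cg s (i - c) = m := cg_add_half hm _ _ hhalf
  have hea : (i - a) + (i' - i) = i' - a := by ring
  have hec : (i - c) + (i' - i) = i' - c := by ring
  rw [hea] at hAa
  rw [hec] at hAc
  have hAC : cg s (i - a) = cg s (i - c) := by omega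
  have hBD : cg t (j - b) = cg t (j - d) := by omega
  rcases cg_eq _ _ hAC with hac | hac
  · -- a = c
    have haceq : a = c := by rwa [sub_right_injective.eq_iff] at hac
    subst haceq
    have hbd : b ≠ d := fun h => hpq (by rw [h])
    rcases cg_eq _ _ hBD with hjb | hjb
    · exact hbd (by rwa [sub_right_injective.eq_iff] at hjb)
    · -- j - d = -(j - b); use w = (i, j')
      have h4' : cg t (j' - b) = cg t (j' - d) := by omega
      rcases cg_eq _ _ h4' with hh | hh
      · exact hbd (by rwa [sub_right_injective.eq_iff] at hh)
      · -- sum zero gives 2e = 0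
        have he : (j' - j) + (j' - j) ≠ 0 := by
          apply double_ne_zero (by omega)
          rw [cycleGraph_adj'] at hadj2
          rcases hadj2 with h | h
          · right; rw [neg_sub]; exact h
          · left; exact h
        apply he
        have e1 : j' - b = (j - b) + (j' - j) := by ring
        have e2 : j' - d = (j - d) + (j' - j) := by ring
        rw [e1, e2] at hh
        have : (j - b) + (j - d) + ((j' - j) + (j' - j)) = 0 := by
          rw [← hh]; ring
        rw [hjb] at this
        simpa using this
  · -- (i - a) + (i - c) = 0, a ≠ c case or a = c
    by_cases haceq : a = c
    · subst haceq
      have hbd : b ≠ d := fun h => hpq (by rw [h])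
      rcases cg_eq _ _ hBD with hjb | hjb
      · exact hbd (by rwa [sub_right_injective.eq_iff] at hjb)
      · have h4' : cg t (j' - b) = cg t (j' - d) := by omega
        rcases cg_eq _ _ h4' with hh | hh
        · exact hbd (by rwa [sub_right_injective.eq_iff] at hh)
        · have he : (j' - j) + (j' - j) ≠ 0 := by
            apply double_ne_zero (by omega)
            rw [cycleGraph_adj'] at hadj2
            rcases hadj2 with h | h
            · right; rw [neg_sub]; exact h
            · left; exact h
          apply he
          have e1 : j' - b = (j - b) + (j' - j) := by ring
          have e2 : j' - d = (j - d) + (j' - j) := by ring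
          rw [e1, e2] at hh
          have : (j - b) + (j - d) + ((j' - j) + (j' - j)) = 0 := by
            rw [← hh]; ring
          rw [hjb] at this
          simpa using this
    · -- a ≠ c; use z = (i'', j)
      have h3' : cg s (i'' - a) = cg s (i'' - c) := by omega
      rcases cg_eq _ _ h3' with hh | hh
      · exact haceq (by rwa [sub_right_injective.eq_iff] at hh)
      · have he : (i'' - i) + (i'' - i) ≠ 0 := by
          apply double_ne_zero (by omega)
          rw [cycleGraph_adj'] at hadj1
          rcases hadj1 with h | h
          · right; rw [neg_sub]; exact h
          · left; exact h
        apply he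
        have e1 : i'' - a = (i - a) + (i'' - i) := by ring
        have e2 : i'' - c = (i - c) + (i'' - i) := by ring
        rw [e1, e2] at hh
        have : (i - a) + (i - c) + ((i'' - i) + (i'' - i)) = 0 := by
          rw [← hh]; ring
        rw [hac] at this
        simpa using this
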